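/- Consider the unconstrained problem min_{x∈ℝ} |x| and define, for smoothing parameter 1, G(x) = |x| − inf_{x'∈ℝ} ( |x'| + (1/2)(x' − x)² ). Then for every x with 0 < |x| ≤ 1 one has G(x) = |x| − x²/2 and the subdifferential of the absolute value at x is the singleton {sgn(x)}, so the Karush–Kuhn–Tucker error K(x) = min{ |q| : q ∈ ∂|·|(x) }² equals 1. Consequently G(x) → 0 as x → 0 with x ≠ 0 while K(x) = 1 for all such x, so there is no constant c > 0 with K(x) ≤ c · G(x) for all x ≠ 0. -/

import Mathlib

open Filter Topology

noncomputable section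

/-- The self-centered smoothed gap (smoothing parameter `1`) for `min_{x∈ℝ} |x|`:
`G(x) = |x| − inf_{x'} (|x'| + (1/2)(x' − x)²)`. -/
def Gabs (x : ℝ) : ℝ := |x| - ⨅ x' : ℝ, (|x'| + 1 / 2 * (x' - x) ^ 2)

/-- The subdifferential of the absolute value at `x`. -/
def absSubdiff (x : ℝ) : Set ℝ := {q : ℝ | ∀ u : ℝ, |x| + q * (u - x) ≤ |u|}

/-- The KKT error `K(x) = min{|q| : q ∈ ∂|·|(x)}²` for the problem `min_{x∈ℝ} |x|`. -/
def Kabs (x : ℝ) : ℝ := sInf {r : ℝ | ∃ q ∈ absSubdiff x, r = |q|} ^ 2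

lemma Gabs_eq {x : ℝ} (hx : |x| ≤ 1) : Gabs x = |x| - x ^ 2 / 2 := by
  have hlb : ∀ x' : ℝ, x ^ 2 / 2 ≤ |x'| + 1 / 2 * (x' - x) ^ 2 := by
    intro x'
    have h1 : x * x' ≤ |x'| := by
      calc x * x' ≤ |x * x'| := le_abs_self _
        _ = |x| * |x'| := abs_mul _ _
        _ ≤ 1 * |x'| := mul_le_mul_of_nonneg_right hx (abs_nonneg _)
        _ = |x'| := one_mul _
    nlinarith [sq_nonneg x']
  have hinf : (⨅ x' : ℝ, (|x'| + 1 / 2 * (x' - x) ^ 2)) = x ^ 2 / 2 := by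
    refine le_antisymm ?_ (le_ciInf hlb)
    have h0 : |(0:ℝ)| + 1 / 2 * ((0:ℝ) - x) ^ 2 = x ^ 2 / 2 := by
      simp; ring
    have := ciInf_le (f := fun x' : ℝ => |x'| + 1 / 2 * (x' - x) ^ 2)
      ⟨x ^ 2 / 2, fun r ⟨x', hx'⟩ => hx' ▸ hlb x'⟩ 0
    have h1 := this.trans (le_of_eq h0)
    simpa using h1
  rw [Gabs, hinf]

lemma absSubdiff_eq {x : ℝ} (hx : x ≠ 0) : absSubdiff x = {Real.sign x} := by
  have hsx : Real.sign x * x = |x| := by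
    rcases lt_or_gt_of_ne hx with h | h
    · rw [Real.sign_of_neg h, abs_of_neg h]; ring
    · rw [Real.sign_of_pos h, abs_of_pos h]; ring
  have hss : Real.sign x * Real.sign x = 1 := by
    rcases lt_or_gt_of_ne hx with h | h
    · rw [Real.sign_of_neg h]; norm_num
    · rw [Real.sign_of_pos h]; norm_num
  ext q
  simp only [absSubdiff, Set.mem_setOf_eq, Set.mem_singleton_iff]
  constructor
  · intro hq
    have h0 := hq 0
    -- |x| + q*(0-x) ≤ 0  →  |x| ≤ q * x
    have h1 : |x| ≤ q * x := by
      simp only [zero_sub, abs_zero, mul_neg] at h0; linarith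
    have habs : |x| + 1 = |x + Real.sign x| := by
      rcases lt_or_gt_of_ne hx with h | h
      · rw [Real.sign_of_neg h, abs_of_neg h, abs_of_neg (by linarith)]; ring
      · rw [Real.sign_of_pos h, abs_of_pos h, abs_of_pos (by linarith)]
    have h2 := hq (x + Real.sign x)
    rw [show x + Real.sign x - x = Real.sign x by ring, ← habs] at h2
    have h2' : q * Real.sign x ≤ 1 := by linarith
    -- from h1 : |x| ≤ q * x, get q * sign x ≥ 1
    have h3 : 1 ≤ q * Real.sign x := by
      have hax : (0:ℝ) < |x| := abs_pos.mpr hx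
      have hx_eq : Real.sign x * |x| = x := by
        rw [← hsx, ← mul_assoc, hss, one_mul]
      nlinarith [h1, hx_eq, hax]
    have h4 : q * Real.sign x = 1 := le_antisymm h2' h3
    calc q = q * (Real.sign x * Real.sign x) := by rw [hss]; ring
      _ = (q * Real.sign x) * Real.sign x := by ring
      _ = Real.sign x := by rw [h4]; ring
  · rintro rfl u
    have : |x| + Real.sign x * (u - x) = Real.sign x * u := by rw [← hsx]; ring
    rw [this]
    calc Real.sign x * u ≤ |Real.sign x * u| := le_abs_self _
      _ = |Real.sign x| * |u| := abs_mul _ _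
      _ ≤ 1 * |u| := mul_le_mul_of_nonneg_right (by
          rcases lt_or_gt_of_ne hx with h | h
          · rw [Real.sign_of_neg h]; norm_num
          · rw [Real.sign_of_pos h]; norm_num) (abs_nonneg _)
      _ = |u| := one_mul _

lemma Kabs_eq {x : ℝ} (hx : x ≠ 0) : Kabs x = 1 := by
  have hs : |Real.sign x| = 1 := by
    rcases lt_or_gt_of_ne hx with h | h
    · rw [Real.sign_of_neg h]; norm_num
    · rw [Real.sign_of_pos h]; norm_num
  have : {r : ℝ | ∃ q ∈ absSubdiff x, r = |q|} = {1} := by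
    rw [absSubdiff_eq hx]
    ext r
    simp [hs, eq_comm]
  rw [Kabs, this, csInf_singleton]; norm_num

/-- counterexample: the smoothed gap cannot bound the KKT error
without smoothness. For `0 < |x| ≤ 1` one has `G(x) = |x| − x²/2`, the subdifferential
of `|·|` at `x` is `{sgn x}`, and `K(x) = 1`.  Consequently `G(x) → 0` as `x → 0`,
`x ≠ 0`, while `K(x) = 1` there, so no constant `c > 0` satisfies `K(x) ≤ c G(x)` for
all `x ≠ 0`. -/
theorem KKT_not_bounded_by_smoothedGap :
    (∀ x : ℝ, 0 < |x| → |x| ≤ 1 →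
      Gabs x = |x| - x ^ 2 / 2 ∧
      absSubdiff x = {Real.sign x} ∧
      Kabs x = 1) ∧
    Tendsto Gabs (𝓝[≠] 0) (𝓝 0) ∧
    ¬ ∃ c : ℝ, 0 < c ∧ ∀ x : ℝ, x ≠ 0 → Kabs x ≤ c * Gabs x := by
  refine ⟨fun x h0 h1 => ⟨Gabs_eq h1, absSubdiff_eq (abs_pos.mp h0), Kabs_eq (abs_pos.mp h0)⟩, ?_, ?_⟩
  · have hcong : Gabs =ᶠ[𝓝[≠] (0:ℝ)] fun x => |x| - x ^ 2 / 2 := by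
      have h1 : ∀ᶠ x : ℝ in 𝓝 0, |x| ≤ 1 := by
        have : ∀ᶠ x : ℝ in 𝓝 0, x ∈ Set.Ioo (-1 : ℝ) 1 :=
          Ioo_mem_nhds (by norm_num) (by norm_num)
        filter_upwards [this] with x hx
        rw [abs_le]; exact ⟨hx.1.le, hx.2.le⟩
      filter_upwards [nhdsWithin_le_nhds h1] with x hx
      exact Gabs_eq hx
    refine Tendsto.congr' hcong.symm ?_
    have : Tendsto (fun x : ℝ => |x| - x ^ 2 / 2) (𝓝 0) (𝓝 0) := by
      have := (continuous_abs.sub (by continuity : Continuous fun x : ℝ => x ^ 2 / 2)).tendsto 0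
      simpa [Pi.sub_def] using this
    exact this.mono_left nhdsWithin_le_nhds
  · rintro ⟨c, hc, h⟩
    set x := min 1 (1 / (2 * c)) with hxdef
    have hx0 : 0 < x := lt_min one_pos (by positivity)
    have hx1 : |x| ≤ 1 := by rw [abs_of_pos hx0]; exact min_le_left _ _
    have hK := Kabs_eq hx0.ne'
    have hG : Gabs x = x - x ^ 2 / 2 := by rw [Gabs_eq hx1, abs_of_pos hx0]
    have hle := h x hx0.ne'
    rw [hK, hG] at hle
    have hxc : x ≤ 1 / (2 * c) := min_le_right _ _
    have hcx : c * x ≤ 1 / 2 := by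
      have h' : c * x ≤ c * (1 / (2 * c)) := mul_le_mul_of_nonneg_left hxc hc.le
      have : c * (1 / (2 * c)) = 1 / 2 := by field_simp
      linarith
    nlinarith [mul_nonneg hc.le (sq_nonneg x), hcx]
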